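/- Let M be a module over the Virasoro algebra, and let w ∈ M satisfy e_{-1} w = 0, e_0 w = (μ+1) w for some scalar μ, and (e_1³ - 6 e_2 e_1 + 6 e_3) w = 0. If w ≠ 0, then μ ∈ {-1, 0, 1}. -/
import Mathlib


/-- Let `M` be a module over the Virasoro algebra and `w ∈ M` nonzero with
`e₋₁ w = 0`, `e₀ w = (μ+1) w` and `(e₁³ - 6 e₂ e₁ + 6 e₃) w = 0`.
Then `μ ∈ {-1, 0, 1}`. -/
theorem virasoro_weight_in_three_values
    {k : Type*} [Field k] [CharZero k]
    {L : Type*} [LieRing L] [LieAlgebra k L]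
    (E : ℤ → L) (C : L)
    (hC : ∀ x : L, ⁅C, x⁆ = 0)
    (hE : ∀ i j : ℤ, ⁅E i, E j⁆ =
      (j - i) • E (i + j) + (if i + j = 0 then ((i : k) ^ 3 - (i : k)) / 12 else 0) • C)
    {M : Type*} [AddCommGroup M] [Module k M] [LieRingModule L M] [LieModule k L M]
    (μ : k) (w : M) (hw : w ≠ 0)
    (h1 : ⁅E (-1), w⁆ = 0)
    (h0 : ⁅E 0, w⁆ = (μ + 1) • w)
    (hann : ⁅E 1, ⁅E 1, ⁅E 1, w⁆⁆⁆ - (6 : ℤ) • ⁅E 2, ⁅E 1, w⁆⁆ + (6 : ℤ) • ⁅E 3, w⁆ = 0) :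
    μ ∈ ({-1, 0, 1} : Set k) := by
  set a := μ + 1 with ha
  -- bracket relations in L
  have b0 : ⁅E (-1), E 0⁆ = E (-1) := by
    have := hE (-1) 0; norm_num at this; exact this
  have b1 : ⁅E (-1), E 1⁆ = (2:k) • E 0 := by
    have := hE (-1) 1; norm_num at this
    rw [this, ← Int.cast_smul_eq_zsmul k]; norm_num
  have b2 : ⁅E (-1), E 2⁆ = (3:k) • E 1 := by
    have := hE (-1) 2; norm_num at this
    rw [this, ← Int.cast_smul_eq_zsmul k]; norm_num
  have b3 : ⁅E (-1), E 3⁆ = (4:k) • E 2 := by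
    have := hE (-1) 3; norm_num at this
    rw [this, ← Int.cast_smul_eq_zsmul k]; norm_num
  have b01 : ⁅E 0, E 1⁆ = E 1 := by
    have := hE 0 1; norm_num at this; exact this
  set w1 : M := ⁅E 1, w⁆ with hw1
  set w2 : M := ⁅E 1, w1⁆ with hw2
  set w3 : M := ⁅E 1, w2⁆ with hw3
  set u : M := ⁅E 2, w1⁆ with hu
  set v : M := ⁅E 3, w⁆ with hv
  set p : M := ⁅E 2, w⁆ with hp
  -- e0 eigenvalues
  have f1 : ⁅E 0, w1⁆ = (a + 1) • w1 := by
    rw [hw1, leibniz_lie, b01, h0, lie_smul]; module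
  have f2 : ⁅E 0, w2⁆ = (a + 2) • w2 := by
    rw [hw2, leibniz_lie, b01, f1, lie_smul]; module
  -- e_{-1} actions
  have g1 : ⁅E (-1), w1⁆ = (2*a) • w := by
    rw [hw1, leibniz_lie, b1, smul_lie, h1, lie_zero, add_zero, h0]; module
  have g2 : ⁅E (-1), w2⁆ = (4*a + 2) • w1 := by
    rw [hw2, leibniz_lie, b1, smul_lie, g1, lie_smul, f1]; module
  have g3 : ⁅E (-1), w3⁆ = (6*a + 6) • w2 := by
    rw [hw3, leibniz_lie, b1, smul_lie, g2, lie_smul, f2]; module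
  have gp : ⁅E (-1), p⁆ = (3:k) • w1 := by
    rw [hp, leibniz_lie, b2, smul_lie, h1, lie_zero, add_zero, ← hw1]
  have gu : ⁅E (-1), u⁆ = (3:k) • w2 + (2*a) • p := by
    rw [hu, leibniz_lie, b2, smul_lie, g1, lie_smul, ← hw2, ← hp]
  have gv : ⁅E (-1), v⁆ = (4:k) • p := by
    rw [hv, leibniz_lie, b3, smul_lie, h1, lie_zero, add_zero, ← hp]
  -- rewrite hann with k-smuls
  rw [← Int.cast_smul_eq_zsmul k, ← Int.cast_smul_eq_zsmul k] at hann
  norm_num at hann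
  -- hann : w3 - (6:k) • u + (6:k) • v = 0
  have H1 := congrArg (fun m => ⁅E (-1), m⁆) hann
  simp only [lie_add, lie_sub, lie_smul, lie_zero] at H1
  rw [g3, gu, gv] at H1
  have eq1 : (6*a - 12) • w2 + (24 - 12*a) • p = 0 := by
    linear_combination (norm := module) H1
  have H2 := congrArg (fun m => ⁅E (-1), m⁆) eq1
  simp only [lie_add, lie_smul, lie_zero] at H2
  rw [g2, gp] at H2
  have eq2 : (24*a^2 - 72*a + 48) • w1 = 0 := by
    linear_combination (norm := module) H2
  have H3 := congrArg (fun m => ⁅E (-1), m⁆) eq2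
  simp only [lie_smul, lie_zero] at H3
  rw [g1] at H3
  have eq3 : (48*a^3 - 144*a^2 + 96*a) • w = 0 := by
    linear_combination (norm := module) H3
  have hs : (48:k)*a^3 - 144*a^2 + 96*a = 0 := by
    rcases smul_eq_zero.mp eq3 with h | h
    · exact h
    · exact absurd h hw
  have hfac : (48:k) * a * (a - 1) * (a - 2) = 0 := by linear_combination hs
  have h48 : (48:k) ≠ 0 := by norm_num
  simp only [Set.mem_insert_iff, Set.mem_singleton_iff]
  rcases mul_eq_zero.mp hfac with h | h
  · rcases mul_eq_zero.mp h with h | h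
    · rcases mul_eq_zero.mp h with h | h
      · exact absurd h h48
      · left; linear_combination h
    · right; left; linear_combination h
  · right; right; linear_combination h
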